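/- Let p, q ∈ ℝ, β ≠ 0, α ≠ 2β, and let f be a probability density function, positive and continuous on (x_i, x_f), with base point x₀ chosen so that Y(x) = ∫_{x₀}^x f(t)^{(β−1)/β} dt ≠ 0 for all x in (x_i, x_f). Let g = 𝔘_{α,β}[f] be the biparametric up transform of f. Then, whenever the integrals are finite, the (p,q)-Fisher information of g has the closed form F_{p,q}[g] = ∫ g(u)^{1+p(q−2)} |g'(u)|^p du = ∫ |((α−2β)/β) Y(x)|^{p(qβ+α−2β)/(2β−α)} f(x)^{(β−p)/β} dx. In particular, if α = (2−q)β then F_{p,q}[g] = ∫ f(x)^{(β−p)/β} dx. -/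

import Mathlib

open MeasureTheory Set Filter Topology

noncomputable section

/-- The open interval with extended-real endpoints, viewed as a set of reals. -/
def intIoo (a b : EReal) : Set ℝ := {x : ℝ | a < (x : EReal) ∧ (x : EReal) < b}

theorem intIoo_isOpen (a b : EReal) : IsOpen (intIoo a b) := by
  have : intIoo a b = (fun x : ℝ => (x : EReal)) ⁻¹' (Set.Ioo a b) := rfl
  rw [this]
  exact isOpen_Ioo.preimage continuous_coe_real_ereal

/-- closed form of the `(p,q)`-Fisher information of the
biparametric up transform `g = 𝔘_{α,β}[f]`:
`F_{p,q}[g] = ∫ |((α-2β)/β) Y|^{p(qβ+α-2β)/(2β-α)} f^{(β-p)/β}`, and for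
`α = (2-q)β` it reduces to `∫ f^{(β-p)/β}`. -/
theorem fisher_information_of_biparametric_up_transform
    (p q α β : ℝ) (hβ : β ≠ 0) (hαβ : α ≠ 2 * β)
    (xi xf : EReal) (hif : xi < xf)
    (x₀ : ℝ) (hx₀l : xi ≤ (x₀ : EReal)) (hx₀r : (x₀ : EReal) ≤ xf)
    (f Y u g g' : ℝ → ℝ)
    (hf_meas : Measurable f)
    (hf_nonneg : ∀ x, 0 ≤ f x)
    (hf_supp : ∀ x ∉ intIoo xi xf, f x = 0)
    (hf_int : (∫ x, f x) = 1)
    (hf_pos : ∀ x ∈ intIoo xi xf, 0 < f x)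
    (hf_cont : ContinuousOn f (intIoo xi xf))
    (hY : ∀ x, Y x = ∫ t in x₀..x, f t ^ ((β - 1) / β))
    (hY_ne : ∀ x ∈ intIoo xi xf, Y x ≠ 0)
    (hu_fin : ∀ x ∈ intIoo xi xf,
      IntegrableOn (fun r => |((α - 2 * β) / β) * Y r| ^ (β / (α - 2 * β)) * f r)
        (intIoo (x : EReal) xf))
    (hu : ∀ x ∈ intIoo xi xf,
      u x = ∫ r in intIoo (x : EReal) xf,
        |((α - 2 * β) / β) * Y r| ^ (β / (α - 2 * β)) * f r)
    (hu_anti : StrictAntiOn u (intIoo xi xf))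
    (hg : ∀ x ∈ intIoo xi xf,
      g (u x) = |((α - 2 * β) / β) * Y x| ^ (β / (2 * β - α)))
    (hg_supp : ∀ v ∉ u '' intIoo xi xf, g v = 0)
    (hg' : ∀ x ∈ intIoo xi xf, HasDerivAt g (g' (u x)) (u x))
    (hfin1 : IntegrableOn (fun v => g v ^ (1 + p * (q - 2)) * |g' v| ^ p)
      (u '' intIoo xi xf))
    (hfin2 : IntegrableOn
      (fun x => |((α - 2 * β) / β) * Y x| ^ (p * (q * β + α - 2 * β) / (2 * β - α))
        * f x ^ ((β - p) / β))
      (intIoo xi xf)) :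
    (∫ v in u '' intIoo xi xf, g v ^ (1 + p * (q - 2)) * |g' v| ^ p)
      = (∫ x in intIoo xi xf,
          |((α - 2 * β) / β) * Y x| ^ (p * (q * β + α - 2 * β) / (2 * β - α))
            * f x ^ ((β - p) / β))
    ∧ (α = (2 - q) * β →
        (∫ v in u '' intIoo xi xf, g v ^ (1 + p * (q - 2)) * |g' v| ^ p)
          = ∫ x in intIoo xi xf, f x ^ ((β - p) / β)) := by
  set I : Set ℝ := intIoo xi xf with hIdef
  have hI_open : IsOpen I := intIoo_isOpen xi xf
  have hI_meas : MeasurableSet I := hI_open.measurableSet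
  have h2βα : 2 * β - α ≠ 0 := sub_ne_zero.mpr (Ne.symm hαβ)
  have hα2β : α - 2 * β ≠ 0 := sub_ne_zero.mpr hαβ
  set c : ℝ := (α - 2 * β) / β with hc_def
  set s : ℝ := β / (2 * β - α) with hs_def
  have hc : c ≠ 0 := div_ne_zero hα2β hβ
  have hs : s ≠ 0 := div_ne_zero hβ h2βα
  have hsc : s * c = -1 := by
    rw [hs_def, hc_def, div_mul_div_comm, div_eq_iff (mul_ne_zero h2βα hβ)]
    ring
  have hsc1 : |s| * |c| = 1 := by rw [← abs_mul, hsc, abs_neg, abs_one]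
  have hexp_neg : β / (α - 2 * β) = -s := by
    rw [hs_def, show α - 2 * β = -(2 * β - α) by ring, div_neg]
  set w : ℝ → ℝ := fun r => |c * Y r| ^ (β / (α - 2 * β)) * f r with hw_def
  have hcY : ∀ x ∈ I, c * Y x ≠ 0 := fun x hx => mul_ne_zero hc (hY_ne x hx)
  have habs : ∀ x ∈ I, 0 < |c * Y x| := fun x hx => abs_pos.mpr (hcY x hx)
  have hw_eq : ∀ x, w x = |c * Y x| ^ (-s) * f x := by
    intro x; simp only [hw_def, hexp_neg]
  have hw_pos : ∀ x ∈ I, 0 < w x := by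
    intro x hx
    rw [hw_eq]
    exact mul_pos (Real.rpow_pos_of_pos (habs x hx) _) (hf_pos x hx)
  -- Y is differentiable on I with derivative f ^ ((β-1)/β)
  have hYint : ∀ x ∈ I, IntervalIntegrable (fun t => f t ^ ((β - 1) / β)) volume x₀ x := by
    intro x hx
    by_contra h
    exact hY_ne x hx ((hY x).trans (intervalIntegral.integral_undef h))
  have hfe_cont : ∀ x ∈ I, ContinuousAt (fun t => f t ^ ((β - 1) / β)) x := by
    intro x hx
    exact (hf_cont.continuousAt (hI_open.mem_nhds hx)).rpow_const (Or.inl (hf_pos x hx).ne')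
  have hYd : ∀ x ∈ I, HasDerivAt Y (f x ^ ((β - 1) / β)) x := by
    intro x hx
    have h0 : HasDerivAt (fun y => ∫ t in x₀..y, f t ^ ((β - 1) / β))
        (f x ^ ((β - 1) / β)) x :=
      intervalIntegral.integral_hasDerivAt_right (hYint x hx)
        (ContinuousAt.stronglyMeasurableAtFilter hI_open hfe_cont x hx) (hfe_cont x hx)
    exact h0.congr_of_eventuallyEq (Filter.Eventually.of_forall hY)
  have hY_cont : ContinuousOn Y I := fun x hx => ((hYd x hx).continuousAt).continuousWithinAt
  have hw_cont : ContinuousOn w I := by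
    rw [hw_def]
    exact (((continuousOn_const.mul hY_cont).abs.rpow_const
      (fun x hx => Or.inl (abs_ne_zero.mpr (hcY x hx)))).mul hf_cont)
  -- splitting lemma for u
  have hsplit : ∀ x ∈ I, ∀ y ∈ I, x ≤ y →
      u x = (∫ r in Set.Ioc x y, w r) + u y := by
    intro x hx y hy hxy
    have hset : intIoo (x : EReal) xf = Set.Ioc x y ∪ intIoo (y : EReal) xf := by
      ext r
      simp only [intIoo, Set.mem_setOf_eq, Set.mem_union, Set.mem_Ioc]
      constructor
      · rintro ⟨h1, h2⟩
        rcases le_or_gt r y with h | h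
        · exact Or.inl ⟨by exact_mod_cast h1, h⟩
        · exact Or.inr ⟨by exact_mod_cast h, h2⟩
      · rintro (⟨h1, h2⟩ | ⟨h1, h2⟩)
        · exact ⟨by exact_mod_cast h1,
            lt_of_le_of_lt (by exact_mod_cast h2 : (r : EReal) ≤ (y : EReal)) hy.2⟩
        · exact ⟨lt_of_le_of_lt (by exact_mod_cast hxy : (x : EReal) ≤ (y : EReal)) h1, h2⟩
    have hdisj : Disjoint (Set.Ioc x y) (intIoo (y : EReal) xf) := by
      apply Set.disjoint_left.mpr
      rintro r ⟨_, hr2⟩ ⟨hr3, _⟩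
      exact absurd (by exact_mod_cast hr3 : y < r) (not_lt.mpr hr2)
    have hsub1 : Set.Ioc x y ⊆ intIoo (x : EReal) xf := by
      rintro r ⟨h1, h2⟩
      exact ⟨by exact_mod_cast h1,
        lt_of_le_of_lt (by exact_mod_cast h2 : (r : EReal) ≤ (y : EReal)) hy.2⟩
    rw [hu x hx, hu y hy, hset,
      setIntegral_union hdisj (intIoo_isOpen _ _).measurableSet
        ((hu_fin x hx).mono_set hsub1) (hu_fin y hy)]
  -- derivative of u
  have hud : ∀ x ∈ I, HasDerivAt u (-(w x)) x := by
    intro x hx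
    obtain ⟨b', hb1, hb2⟩ := exists_between hx.2
    have hb'top : b' ≠ ⊤ := by rintro rfl; exact not_top_lt hb2
    have hb'bot : b' ≠ ⊥ := by rintro rfl; exact not_lt_bot hb1
    lift b' to ℝ using ⟨hb'top, hb'bot⟩ with b
    have hxb : x < b := by exact_mod_cast hb1
    have hbI : b ∈ I := ⟨hx.1.trans hb1, hb2⟩
    have hev : u =ᶠ[𝓝 x] fun z => (∫ r in z..b, w r) + u b := by
      have hmem : Set.Iio b ∩ I ∈ 𝓝 x :=
        Filter.inter_mem (Iio_mem_nhds hxb) (hI_open.mem_nhds hx)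
      filter_upwards [hmem] with z hz
      rw [hsplit z hz.2 b hbI hz.1.le, intervalIntegral.integral_of_le hz.1.le]
    have hsub : Set.Ioc x b ⊆ intIoo (x : EReal) xf := by
      rintro r ⟨h1, h2⟩
      exact ⟨by exact_mod_cast h1,
        lt_of_le_of_lt (by exact_mod_cast h2 : (r : EReal) ≤ (b : EReal)) hb2⟩
    have hIIb : IntervalIntegrable w volume x b := by
      rw [intervalIntegrable_iff_integrableOn_Ioc_of_le hxb.le]
      exact (hu_fin x hx).mono_set hsub
    have hderiv0 : HasDerivAt (fun z => ∫ r in z..b, w r) (-(w x)) x :=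
      intervalIntegral.integral_hasDerivAt_left hIIb
        (hw_cont.stronglyMeasurableAtFilter hI_open x hx)
        (hw_cont.continuousAt (hI_open.mem_nhds hx))
    exact (hderiv0.add_const (u b)).congr_of_eventuallyEq hev
  -- the key derivative identity for g'
  have hkey : ∀ x ∈ I, |g' (u x)| * w x = |c * Y x| ^ (s - 1) * f x ^ ((β - 1) / β) := by
    intro x hx
    have hfx := hf_pos x hx
    have hchain : HasDerivAt (g ∘ u) (g' (u x) * -(w x)) x := (hg' x hx).comp x (hud x hx)
    have hcYd : HasDerivAt (fun z => c * Y z) (c * f x ^ ((β - 1) / β)) x :=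
      (hYd x hx).const_mul c
    have hevI : ∀ᶠ z in 𝓝 x, z ∈ I := hI_open.eventually_mem hx
    rcases (hcY x hx).lt_or_gt with hneg | hpos
    · -- negative case
      have hev2 : ∀ᶠ z in 𝓝 x, c * Y z < 0 :=
        hcYd.continuousAt.eventually (eventually_lt_nhds hneg)
      have hφd : HasDerivAt (fun z => (-(c * Y z)) ^ s)
          (-(c * f x ^ ((β - 1) / β)) * s * (-(c * Y x)) ^ (s - 1)) x :=
        hcYd.neg.rpow_const (Or.inl (neg_ne_zero.mpr (hcY x hx)))
      have hφd' : HasDerivAt (fun z => |c * Y z| ^ s)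
          (-(c * f x ^ ((β - 1) / β)) * s * (-(c * Y x)) ^ (s - 1)) x := by
        apply hφd.congr_of_eventuallyEq
        filter_upwards [hev2] with z hz
        rw [abs_of_neg hz]
      have hgu : HasDerivAt (g ∘ u)
          (-(c * f x ^ ((β - 1) / β)) * s * (-(c * Y x)) ^ (s - 1)) x := by
        apply hφd'.congr_of_eventuallyEq
        filter_upwards [hevI] with z hz
        exact hg z hz
      have huniq := hchain.unique hgu
      calc |g' (u x)| * w x = |g' (u x) * -(w x)| := by
            rw [abs_mul, abs_neg, abs_of_pos (hw_pos x hx)]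
        _ = |(-(c * f x ^ ((β - 1) / β))) * s * (-(c * Y x)) ^ (s - 1)| := by rw [huniq]
        _ = |c| * f x ^ ((β - 1) / β) * |s| * (-(c * Y x)) ^ (s - 1) := by
            rw [abs_mul, abs_mul, abs_neg, abs_mul,
              abs_of_pos (Real.rpow_pos_of_pos hfx _),
              abs_of_pos (Real.rpow_pos_of_pos (neg_pos.mpr hneg) _)]
        _ = |c * Y x| ^ (s - 1) * f x ^ ((β - 1) / β) := by
            rw [abs_of_neg hneg]
            have h9 : |c| * f x ^ ((β - 1) / β) * |s| * (-(c * Y x)) ^ (s - 1)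
                = (|s| * |c|) * ((-(c * Y x)) ^ (s - 1) * f x ^ ((β - 1) / β)) := by ring
            rw [h9, hsc1, one_mul]
    · -- positive case
      have hev2 : ∀ᶠ z in 𝓝 x, 0 < c * Y z :=
        hcYd.continuousAt.eventually (eventually_gt_nhds hpos)
      have hφd : HasDerivAt (fun z => (c * Y z) ^ s)
          (c * f x ^ ((β - 1) / β) * s * (c * Y x) ^ (s - 1)) x :=
        hcYd.rpow_const (Or.inl hpos.ne')
      have hφd' : HasDerivAt (fun z => |c * Y z| ^ s)
          (c * f x ^ ((β - 1) / β) * s * (c * Y x) ^ (s - 1)) x := by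
        apply hφd.congr_of_eventuallyEq
        filter_upwards [hev2] with z hz
        rw [abs_of_pos hz]
      have hgu : HasDerivAt (g ∘ u)
          (c * f x ^ ((β - 1) / β) * s * (c * Y x) ^ (s - 1)) x := by
        apply hφd'.congr_of_eventuallyEq
        filter_upwards [hevI] with z hz
        exact hg z hz
      have huniq := hchain.unique hgu
      calc |g' (u x)| * w x = |g' (u x) * -(w x)| := by
            rw [abs_mul, abs_neg, abs_of_pos (hw_pos x hx)]
        _ = |c * f x ^ ((β - 1) / β) * s * (c * Y x) ^ (s - 1)| := by rw [huniq]
        _ = |c| * f x ^ ((β - 1) / β) * |s| * (c * Y x) ^ (s - 1) := by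
            rw [abs_mul, abs_mul, abs_mul,
              abs_of_pos (Real.rpow_pos_of_pos hfx _),
              abs_of_pos (Real.rpow_pos_of_pos hpos _)]
        _ = |c * Y x| ^ (s - 1) * f x ^ ((β - 1) / β) := by
            rw [abs_of_pos hpos]
            have h9 : |c| * f x ^ ((β - 1) / β) * |s| * (c * Y x) ^ (s - 1)
                = (|s| * |c|) * ((c * Y x) ^ (s - 1) * f x ^ ((β - 1) / β)) := by ring
            rw [h9, hsc1, one_mul]
  -- pointwise computation of the transformed integrand
  have hpt : ∀ x ∈ I, |(-(w x))| • (g (u x) ^ (1 + p * (q - 2)) * |g' (u x)| ^ p)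
      = |c * Y x| ^ (p * (q * β + α - 2 * β) / (2 * β - α)) * f x ^ ((β - p) / β) := by
    intro x hx
    have hA : (0 : ℝ) < |c * Y x| := habs x hx
    have hF : (0 : ℝ) < f x := hf_pos x hx
    have hg'_abs : |g' (u x)| = |c * Y x| ^ (s - 1) * f x ^ ((β - 1) / β) / w x := by
      rw [eq_div_iff (hw_pos x hx).ne']
      exact hkey x hx
    rw [abs_neg, abs_of_pos (hw_pos x hx), smul_eq_mul, hg x hx, hg'_abs, hw_eq]
    have e2 : |c * Y x| ^ (s - 1) * f x ^ ((β - 1) / β) / (|c * Y x| ^ (-s) * f x)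
        = |c * Y x| ^ (2 * s - 1) * f x ^ ((β - 1) / β - 1) := by
      rw [show |c * Y x| ^ (s - 1) * f x ^ ((β - 1) / β) / (|c * Y x| ^ (-s) * f x)
          = (|c * Y x| ^ (s - 1) / |c * Y x| ^ (-s)) * (f x ^ ((β - 1) / β) / f x ^ (1 : ℝ))
          from by rw [Real.rpow_one]; ring,
        ← Real.rpow_sub hA, ← Real.rpow_sub hF,
        show s - 1 - -s = 2 * s - 1 by ring]
    rw [e2]
    have e1 : (|c * Y x| ^ s) ^ (1 + p * (q - 2)) = |c * Y x| ^ (s * (1 + p * (q - 2))) :=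
      (Real.rpow_mul hA.le _ _).symm
    have e3 : (|c * Y x| ^ (2 * s - 1) * f x ^ ((β - 1) / β - 1)) ^ p
        = |c * Y x| ^ ((2 * s - 1) * p) * f x ^ (((β - 1) / β - 1) * p) := by
      rw [Real.mul_rpow (Real.rpow_pos_of_pos hA _).le (Real.rpow_pos_of_pos hF _).le,
        ← Real.rpow_mul hA.le, ← Real.rpow_mul hF.le]
    rw [e1, e3]
    calc |c * Y x| ^ (-s) * f x
          * (|c * Y x| ^ (s * (1 + p * (q - 2)))
            * (|c * Y x| ^ ((2 * s - 1) * p) * f x ^ (((β - 1) / β - 1) * p)))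
        = (|c * Y x| ^ (-s) * |c * Y x| ^ (s * (1 + p * (q - 2)))
            * |c * Y x| ^ ((2 * s - 1) * p))
          * (f x ^ (1 : ℝ) * f x ^ (((β - 1) / β - 1) * p)) := by
          rw [Real.rpow_one]; ring
      _ = |c * Y x| ^ (-s + s * (1 + p * (q - 2)) + (2 * s - 1) * p)
          * f x ^ (1 + ((β - 1) / β - 1) * p) := by
          rw [← Real.rpow_add hA, ← Real.rpow_add hA, ← Real.rpow_add hF]
      _ = |c * Y x| ^ (p * (q * β + α - 2 * β) / (2 * β - α)) * f x ^ ((β - p) / β) := by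
          have hE1 : -s + s * (1 + p * (q - 2)) + (2 * s - 1) * p
              = p * (q * β + α - 2 * β) / (2 * β - α) := by
            rw [hs_def, eq_div_iff h2βα]
            have hsb : β / (2 * β - α) * (2 * β - α) = β := div_mul_cancel₀ _ h2βα
            linear_combination (p * q) * hsb
          have hE2 : 1 + ((β - 1) / β - 1) * p = (β - p) / β := by
            field_simp
            ring
          rw [hE1, hE2]
  -- change of variables
  have hCOV := integral_image_eq_integral_abs_deriv_smul hI_meas
      (fun x hx => (hud x hx).hasDerivWithinAt) hu_anti.injOn
      (fun v => g v ^ (1 + p * (q - 2)) * |g' v| ^ p)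
  have hmain : (∫ v in u '' I, g v ^ (1 + p * (q - 2)) * |g' v| ^ p)
      = ∫ x in I, |c * Y x| ^ (p * (q * β + α - 2 * β) / (2 * β - α))
          * f x ^ ((β - p) / β) := by
    rw [hCOV]
    exact setIntegral_congr_fun hI_meas (fun x hx => hpt x hx)
  refine ⟨hmain, fun hαq => hmain.trans (setIntegral_congr_fun hI_meas fun x hx => ?_)⟩
  have hz : p * (q * β + α - 2 * β) / (2 * β - α) = 0 := by
    have hnum : p * (q * β + α - 2 * β) = 0 := by rw [hαq]; ring
    rw [hnum, zero_div]
  rw [hz, Real.rpow_zero, one_mul]
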